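/- Let r > 0 and c = √(2r). Define v : ℝ → ℝ by v(x) = (1/(ec)) e^{cx} for x < 1/c and v(x) = x for x ≥ 1/c. Then v is continuously differentiable on ℝ, v is convex, v(x) ≥ max(x, 0) for all x with strict inequality for x < 1/c, (1/2) v″(x) − r v(x) = 0 for x < 1/c, and (1/2) v″(x) − r v(x) = −r x < 0 for x > 1/c. -/

import Mathlib

open Real

/-- Properties of the auxiliary value function
`v(x) = (1/(ec)) e^{cx}` for `x < 1/c` and `v(x) = x` for `x ≥ 1/c`, with
`c = √(2r)`, `r > 0`: it is `C¹`, convex, dominates `max(x,0)` (strictly for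
`x < 1/c`), is `r`-harmonic below the boundary and strictly superharmonic above. -/
theorem stmt_8 (r c : ℝ) (hr : 0 < r) (hc : c = Real.sqrt (2 * r))
    (v : ℝ → ℝ)
    (hv : ∀ x : ℝ, v x = if x < 1/c then (1 / (Real.exp 1 * c)) * Real.exp (c * x) else x) :
    ContDiff ℝ 1 v ∧
    ConvexOn ℝ Set.univ v ∧
    (∀ x : ℝ, max x 0 ≤ v x) ∧
    (∀ x : ℝ, x < 1/c → max x 0 < v x) ∧
    (∀ x : ℝ, x < 1/c → (1/2) * deriv (deriv v) x - r * v x = 0) ∧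
    (∀ x : ℝ, 1/c < x →
      (1/2) * deriv (deriv v) x - r * v x = -(r * x) ∧ -(r * x) < 0) := by
  have hc0 : 0 < c := by
    rw [hc]; exact Real.sqrt_pos.2 (by linarith)
  have hc2 : c * c = 2 * r := by
    rw [hc]; exact Real.mul_self_sqrt (by linarith)
  have he0 : (0:ℝ) < Real.exp 1 := Real.exp_pos 1
  set b := 1/c with hb
  have hb0 : 0 < b := by positivity
  set a := 1 / (Real.exp 1 * c) with ha
  have ha0 : 0 < a := by positivity
  have hcb : c * b = 1 := by rw [hb]; field_simp
  set g : ℝ → ℝ := fun x => a * Real.exp (c * x) with hgdef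
  -- derivative of g
  have hgd : ∀ x, HasDerivAt g (Real.exp (c * x) / Real.exp 1) x := by
    intro x
    have h1 : HasDerivAt (fun y : ℝ => c * y) (c * 1) x := (hasDerivAt_id x).const_mul c
    have h2 := h1.exp.const_mul a
    refine h2.congr_deriv ?_
    rw [ha]; field_simp
  -- v agrees with g on Iic b and with id on Ici b
  have hvg : ∀ x ∈ Set.Iic b, v x = g x := by
    intro x hx
    rcases (Set.mem_Iic.mp hx).lt_or_eq with h | h
    · rw [hv x, if_pos h]
    · rw [hv x, if_neg (by rw [h]; exact lt_irrefl b), hgdef]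
      simp only [h, hcb]
      rw [ha, hb]; field_simp
  have hvid : ∀ x ∈ Set.Ici b, v x = x := by
    intro x hx
    rw [hv x, if_neg (not_lt.2 hx)]
  -- f = candidate derivative of v
  set f : ℝ → ℝ := fun x => min (Real.exp (c * x) / Real.exp 1) 1 with hfdef
  have hflt : ∀ x ≤ b, f x = Real.exp (c * x) / Real.exp 1 := by
    intro x hx
    apply min_eq_left
    rw [div_le_one he0]
    calc Real.exp (c * x) ≤ Real.exp (c * b) :=
          Real.exp_le_exp.2 (by nlinarith)
      _ = Real.exp 1 := by rw [hcb]
  have hfgt : ∀ x, b ≤ x → f x = 1 := by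
    intro x hx
    apply min_eq_right
    rw [le_div_iff₀ he0, one_mul]
    calc Real.exp 1 = Real.exp (c * b) := by rw [hcb]
      _ ≤ Real.exp (c * x) := Real.exp_le_exp.2 (by nlinarith)
  have hvd : ∀ x, HasDerivAt v (f x) x := by
    intro x
    rcases lt_trichotomy x b with h | h | h
    · rw [hflt x h.le]
      refine (hgd x).congr_of_eventuallyEq ?_
      filter_upwards [Iio_mem_nhds h] with y hy
      rw [hv y, if_pos (Set.mem_Iio.mp hy)]
    · rw [hfgt x h.ge]
      have h1 : HasDerivWithinAt v 1 (Set.Iic b) x := by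
        have hd := (hgd x).hasDerivWithinAt (s := Set.Iic b)
        have := hd.congr hvg (hvg x h.le)
        refine this.congr_deriv ?_
        rw [h, hcb, div_self he0.ne']
      have h2 : HasDerivWithinAt v 1 (Set.Ici b) x :=
        ((hasDerivAt_id x).hasDerivWithinAt (s := Set.Ici b)).congr hvid (hvid x h.ge)
      have h3 := h1.union h2
      rw [Set.Iic_union_Ici] at h3
      exact hasDerivWithinAt_univ.mp h3
    · rw [hfgt x h.le]
      refine (hasDerivAt_id x).congr_of_eventuallyEq ?_
      filter_upwards [Ioi_mem_nhds h] with y hy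
      rw [hv y, if_neg (not_lt.2 (Set.mem_Ioi.mp hy).le)]; rfl
  have hderiv : deriv v = f := funext fun x => (hvd x).deriv
  have hdiff : Differentiable ℝ v := fun x => (hvd x).differentiableAt
  have hstrict : ∀ x < b, max x 0 < v x := by
    intro x hx
    have hvx : v x = a * Real.exp (c * x) := by rw [hv x, if_pos hx]
    have h1 : c * x < 1 := by
      calc c * x < c * b := by exact mul_lt_mul_of_pos_left hx hc0
        _ = 1 := hcb
    have hne : c * x - 1 ≠ 0 := by linarith
    have hlt := Real.add_one_lt_exp hne
    rw [Real.exp_sub] at hlt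
    have h2 : c * x < Real.exp (c * x) / Real.exp 1 := by linarith
    have h3 : c * x * Real.exp 1 < Real.exp (c * x) := (lt_div_iff₀ he0).1 h2
    have hx2 : x < a * Real.exp (c * x) := by
      rw [ha, one_div_mul_eq_div, lt_div_iff₀ (by positivity)]
      nlinarith
    have h0 : (0:ℝ) < a * Real.exp (c * x) := by positivity
    rw [hvx]; exact max_lt hx2 h0
  refine ⟨?_, ?_, ?_, ?_, ?_, ?_⟩
  · -- C¹
    rw [contDiff_one_iff_deriv]
    refine ⟨hdiff, ?_⟩
    rw [hderiv, hfdef]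
    exact ((Real.continuous_exp.comp (continuous_const.mul continuous_id)).div_const
      (Real.exp 1)).min continuous_const
  · -- convex
    apply Monotone.convexOn_univ_of_deriv hdiff
    rw [hderiv, hfdef]
    refine Monotone.min ?_ monotone_const
    intro x y hxy
    dsimp only
    gcongr
  · -- domination
    intro x
    rcases lt_or_ge x b with h | h
    · exact (hstrict x h).le
    · rw [hvid x h]
      exact max_le le_rfl (hb0.le.trans h)
  · exact hstrict
  · -- harmonic below
    intro x hx
    have hev : deriv v =ᶠ[nhds x] (fun y => Real.exp (c * y) / Real.exp 1) := by
      filter_upwards [Iio_mem_nhds hx] with y hy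
      rw [hderiv]; exact hflt y (Set.mem_Iio.mp hy).le
    have h1 : HasDerivAt (fun y : ℝ => c * y) (c * 1) x := (hasDerivAt_id x).const_mul c
    have hdd : deriv (deriv v) x = Real.exp (c * x) * (c * 1) / Real.exp 1 := by
      rw [hev.deriv_eq]
      exact (h1.exp.div_const (Real.exp 1)).deriv
    rw [hdd, hv x, if_pos hx, ha]
    field_simp
    linear_combination Real.exp (c * x) * hc2
  · -- superharmonic above
    intro x hx
    have hx0 : 0 < x := hb0.trans hx
    constructor
    · have hev : deriv v =ᶠ[nhds x] (fun _ : ℝ => (1:ℝ)) := by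
        filter_upwards [Ioi_mem_nhds hx] with y hy
        rw [hderiv]; exact hfgt y (Set.mem_Ioi.mp hy).le
      rw [hev.deriv_eq, deriv_const, hv x, if_neg (not_lt.2 hx.le)]
      ring
    · nlinarith
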